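/- Let μ be a finite positive Borel measure on ℝ with no atoms. Then the double integral ∫∫ sin((λ−λ')T)/((λ−λ')T) dμ(λ) dμ(λ') tends to 0 as T → ∞ (where the integrand is interpreted as 1 when λ = λ'). -/

import Mathlib

open Filter MeasureTheory

lemma sinc_norm_le_one (x : ℝ) :
    ‖if x = 0 then (1 : ℝ) else Real.sin x / x‖ ≤ 1 := by
  split_ifs with h
  · simp
  · rw [Real.norm_eq_abs, abs_div, div_le_one (abs_pos.mpr h)]
    exact Real.abs_sin_le_abs

lemma sinc_meas (T : ℝ) :
    Measurable (fun p : ℝ × ℝ =>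
      if (p.1 - p.2) * T = 0 then (1 : ℝ)
        else Real.sin ((p.1 - p.2) * T) / ((p.1 - p.2) * T)) := by
  have hm : Measurable (fun p : ℝ × ℝ => (p.1 - p.2) * T) :=
    (measurable_fst.sub measurable_snd).mul measurable_const
  exact Measurable.ite (hm (measurableSet_singleton 0)) measurable_const
    ((Real.measurable_sin.comp hm).div hm)

/-- For a finite non-atomic positive Borel measure `μ` on `ℝ`,
`∫∫ sinc((λ−λ')T) dμ(λ) dμ(λ') → 0` as `T → ∞`, where `sinc x = sin x / x`, `sinc 0 = 1`. -/
theorem double_sinc_tendsto_zero (μ : Measure ℝ) [IsFiniteMeasure μ] [NullSingletonClass μ] :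
    Tendsto (fun T : ℝ =>
        ∫ l, ∫ l',
          (if (l - l') * T = 0 then (1 : ℝ)
            else Real.sin ((l - l') * T) / ((l - l') * T)) ∂μ ∂μ)
      atTop (nhds 0) := by
  set F : ℝ → ℝ × ℝ → ℝ := fun T p =>
    if (p.1 - p.2) * T = 0 then (1 : ℝ)
      else Real.sin ((p.1 - p.2) * T) / ((p.1 - p.2) * T) with hF
  -- the diagonal is null for μ.prod μ
  have hDmeas : MeasurableSet {p : ℝ × ℝ | p.1 = p.2} :=
    measurableSet_eq_fun measurable_fst measurable_snd
  have hdiag : (μ.prod μ) {p : ℝ × ℝ | p.1 = p.2} = 0 := by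
    rw [Measure.prod_apply hDmeas]
    have : ∀ x : ℝ, μ (Prod.mk x ⁻¹' {p : ℝ × ℝ | p.1 = p.2}) = 0 := by
      intro x
      have : (Prod.mk x ⁻¹' {p : ℝ × ℝ | p.1 = p.2}) = {x} := by
        ext y; simp [eq_comm]
      rw [this]
      exact measure_singleton x
    simp [this]
  have hae : ∀ᵐ p ∂(μ.prod μ), p.1 ≠ p.2 := by
    rw [ae_iff]
    simpa using hdiag
  -- integrability of each F T
  have hint : ∀ T : ℝ, Integrable (F T) (μ.prod μ) := by
    intro T
    refine (integrable_const (1 : ℝ)).mono' ((sinc_meas T).aestronglyMeasurable) ?_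
    exact Filter.Eventually.of_forall fun p => sinc_norm_le_one _
  -- convergence of the product integrals
  have key : Tendsto (fun T : ℝ => ∫ p, F T p ∂(μ.prod μ)) atTop (nhds 0) := by
    have h0 : (0 : ℝ) = ∫ _p : ℝ × ℝ, (0 : ℝ) ∂(μ.prod μ) := by simp
    rw [h0]
    apply tendsto_integral_filter_of_dominated_convergence (fun _ => (1 : ℝ))
    · exact Filter.Eventually.of_forall fun T => (sinc_meas T).aestronglyMeasurable
    · exact Filter.Eventually.of_forall fun T =>
        Filter.Eventually.of_forall fun p => sinc_norm_le_one _
    · exact integrable_const 1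
    · filter_upwards [hae] with p hp
      have hd : (0 : ℝ) < |p.1 - p.2| := abs_pos.mpr (sub_ne_zero.mpr hp)
      have hg : Tendsto (fun T : ℝ => (|p.1 - p.2| * T)⁻¹) atTop (nhds 0) :=
        (Tendsto.const_mul_atTop hd tendsto_id).inv_tendsto_atTop
      apply squeeze_zero_norm' _ hg
      filter_upwards [eventually_gt_atTop (0 : ℝ)] with T hT
      have hx : (p.1 - p.2) * T ≠ 0 :=
        mul_ne_zero (sub_ne_zero.mpr hp) (ne_of_gt hT)
      have habs : |(p.1 - p.2) * T| = |p.1 - p.2| * T := by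
        rw [abs_mul, abs_of_pos hT]
      simp only [hF, hx, if_false, Real.norm_eq_abs, abs_div]
      rw [habs] at *
      rw [div_le_iff₀ (by positivity), inv_mul_cancel₀ (by positivity)]
      calc |Real.sin ((p.1 - p.2) * T)| ≤ 1 := Real.abs_sin_le_one _
      _ = 1 := rfl
  -- convert to iterated integrals
  have heq : ∀ T : ℝ, (∫ p, F T p ∂(μ.prod μ)) =
      ∫ l, ∫ l', F T (l, l') ∂μ ∂μ := fun T => integral_prod _ (hint T)
  exact key.congr fun T => heq T
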